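/- Let θ be irrational and let e_n = U^{k_n} V^{l_n} be words in the generators U, V of the irrational rotation C*-algebra A_θ (satisfying UV = e^{2πiθ}VU), where (k_n, l_n) are chosen as in the inductive construction so that ‖e_n e_j + e_j e_n‖ ≤ 2^{1-n} and ‖e_n e_j* + e_j* e_n‖ ≤ 2^{1-n} for j < n. Then for every N and every n large enough (depending on N), the linear span E_N^n of e_{n+1}, …, e_{n+N} satisfies: for all x ∈ E_N^n, ‖x‖_{L²(τ)} ≤ ‖x‖_{A_θ} ≤ 2‖x‖_{L²(τ)}, where τ is the canonical trace on A_θ. -/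

import Mathlib

open Complex
open scoped BigOperators

section AuxSpan16

variable {A : Type*} [NormedRing A] [StarRing A] [CStarRing A] [NormedAlgebra ℂ A]
    [StarModule ℂ A] [CompleteSpace A]

set_option linter.unusedSectionVars false in
lemma aux_comm16 (u v : unitary A) (c : ℂ) (hc : c ≠ 0)
    (hrel : (u : A) * v = c • ((v : A) * (u : A))) (a b : ℤ) :
    ((u ^ a : unitary A) : A) * ((v ^ b : unitary A) : A)
      = c ^ (a * b) • (((v ^ b : unitary A) : A) * ((u ^ a : unitary A) : A)) := by
  set u' : Aˣ := Unitary.toUnits u with hu'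
  set v' : Aˣ := Unitary.toUnits v with hv'
  set cu : ℂˣ := Units.mk0 c hc with hcu
  set cA : Aˣ := Units.map ((algebraMap ℂ A : ℂ →+* A) : ℂ →* A) cu with hcA
  have hcAval : ∀ m : ℤ, ((cA ^ m : Aˣ) : A) = algebraMap ℂ A (c ^ m) := by
    intro m
    rw [hcA, ← map_zpow (Units.map ((algebraMap ℂ A : ℂ →+* A) : ℂ →* A)) cu m,
      Units.coe_map]
    show algebraMap ℂ A ((cu ^ m : ℂˣ) : ℂ) = _
    rw [hcu, Units.val_zpow_eq_zpow_val, Units.val_mk0]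
  have hcomm : ∀ w : Aˣ, Commute cA w := by
    intro w
    apply Units.ext
    exact Algebra.commutes c (w : A)
  have h1 : SemiconjBy u' v' (cA * v') := by
    apply Units.ext
    show (u : A) * v = (algebraMap ℂ A c * (v : A)) * (u : A)
    rw [hrel, Algebra.smul_def, mul_assoc]
  have h2 : SemiconjBy u' (v' ^ b) (cA ^ b * v' ^ b) := by
    have := h1.zpow_right b
    rwa [(hcomm v').mul_zpow] at this
  have h3 : SemiconjBy (v' ^ b) u' (cA ^ (-b) * u') := by
    show v' ^ b * u' = (cA ^ (-b) * u') * v' ^ b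
    have h2' : u' * v' ^ b = cA ^ b * v' ^ b * u' := h2
    calc v' ^ b * u' = cA ^ (-b) * (cA ^ b * v' ^ b * u') := by
          rw [← mul_assoc, ← mul_assoc, ← zpow_add, neg_add_cancel, zpow_zero, one_mul]
      _ = cA ^ (-b) * (u' * v' ^ b) := by rw [← h2']
      _ = (cA ^ (-b) * u') * v' ^ b := by rw [mul_assoc]
  have h4 : SemiconjBy (v' ^ b) (u' ^ a) (cA ^ (-(a * b)) * u' ^ a) := by
    have := h3.zpow_right a
    rwa [((hcomm u').zpow_left (-b)).mul_zpow, ← zpow_mul, neg_mul, mul_comm b a] at this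
  have key : u' ^ a * v' ^ b = cA ^ (a * b) * (v' ^ b * u' ^ a) := by
    have h4' : v' ^ b * u' ^ a = (cA ^ (-(a * b)) * u' ^ a) * v' ^ b := h4
    rw [h4', ← mul_assoc, ← mul_assoc, ← zpow_add, add_neg_cancel, zpow_zero, one_mul]
  have hval : ∀ (w : unitary A) (m : ℤ), ((w ^ m : unitary A) : A)
      = ((Unitary.toUnits w ^ m : Aˣ) : A) := by
    intro w m
    rw [← map_zpow]
    rfl
  have hkey := congrArg (Units.val) key
  rw [Units.val_mul, Units.val_mul, Units.val_mul, hcAval] at hkey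
  rw [hval u a, hval v b, hkey, Algebra.smul_def]

set_option linter.unusedSectionVars false in
lemma aux_word16 (U V : unitary A) (c : ℂ) (hc : c ≠ 0)
    (hrel' : ∀ a b : ℤ, ((U ^ a : unitary A) : A) * ((V ^ b : unitary A) : A)
      = c ^ (a * b) • (((V ^ b : unitary A) : A) * ((U ^ a : unitary A) : A)))
    (k1 l1 k2 l2 : ℕ) :
    star (((U ^ k1 : unitary A) : A) * ((V ^ l1 : unitary A) : A))
        * (((U ^ k2 : unitary A) : A) * ((V ^ l2 : unitary A) : A))
      = c ^ (((k2 : ℤ) - k1) * l1)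
        • ((U ^ ((k2 : ℤ) - k1) * V ^ ((l2 : ℤ) - l1) : unitary A) : A) := by
  have hswap : ∀ x y : ℤ, ((V ^ y : unitary A) : A) * ((U ^ x : unitary A) : A)
      = c ^ (-(x * y)) • (((U ^ x : unitary A) : A) * ((V ^ y : unitary A) : A)) := by
    intro x y
    rw [hrel' x y, smul_smul, ← zpow_add₀ hc, neg_add_cancel, zpow_zero, one_smul]
  have hcoe : ∀ w z : unitary A, ((w * z : unitary A) : A) = (w : A) * z := fun _ _ => rfl
  have hstar : ∀ (w : unitary A) (m : ℕ), star ((w ^ m : unitary A) : A)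
      = ((w ^ (-(m : ℤ)) : unitary A) : A) := by
    intro w m
    rw [← Unitary.coe_star, Unitary.star_eq_inv, zpow_neg, zpow_natCast]
  have hnat : ∀ (w : unitary A) (m : ℕ), ((w ^ m : unitary A) : A)
      = ((w ^ (m : ℤ) : unitary A) : A) := by
    intro w m; rw [zpow_natCast]
  calc star (((U ^ k1 : unitary A) : A) * ((V ^ l1 : unitary A) : A))
        * (((U ^ k2 : unitary A) : A) * ((V ^ l2 : unitary A) : A))
      = ((V ^ (-(l1 : ℤ)) : unitary A) : A) * ((((U ^ (-(k1 : ℤ)) : unitary A) : A)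
          * ((U ^ (k2 : ℤ) : unitary A) : A)) * ((V ^ (l2 : ℤ) : unitary A) : A)) := by
        rw [star_mul, hstar, hstar, hnat U k2, hnat V l2]
        rw [mul_assoc, mul_assoc]
    _ = ((V ^ (-(l1 : ℤ)) : unitary A) : A) * (((U ^ ((k2 : ℤ) - k1) : unitary A) : A)
          * ((V ^ (l2 : ℤ) : unitary A) : A)) := by
        rw [← hcoe, ← zpow_add, neg_add_eq_sub]
    _ = (((V ^ (-(l1 : ℤ)) : unitary A) : A) * ((U ^ ((k2 : ℤ) - k1) : unitary A) : A))
          * ((V ^ (l2 : ℤ) : unitary A) : A) := by rw [mul_assoc]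
    _ = (c ^ (-(((k2 : ℤ) - k1) * (-(l1 : ℤ)))) • (((U ^ ((k2 : ℤ) - k1) : unitary A) : A)
          * ((V ^ (-(l1 : ℤ)) : unitary A) : A))) * ((V ^ (l2 : ℤ) : unitary A) : A) := by
        rw [hswap]
    _ = c ^ (((k2 : ℤ) - k1) * l1) • (((U ^ ((k2 : ℤ) - k1) : unitary A) : A)
          * (((V ^ (-(l1 : ℤ)) : unitary A) : A) * ((V ^ (l2 : ℤ) : unitary A) : A))) := by
        rw [smul_mul_assoc, mul_assoc]
        congr 1
        ring
    _ = c ^ (((k2 : ℤ) - k1) * l1) • (((U ^ ((k2 : ℤ) - k1) : unitary A) : A)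
          * ((V ^ ((l2 : ℤ) - l1) : unitary A) : A)) := by
        rw [← hcoe (V ^ (-(l1:ℤ))), ← zpow_add, neg_add_eq_sub]
    _ = c ^ (((k2 : ℤ) - k1) * l1)
        • ((U ^ ((k2 : ℤ) - k1) * V ^ ((l2 : ℤ) - l1) : unitary A) : A) := by rw [hcoe]

set_option linter.unusedSectionVars false in
lemma aux_re_nonneg16 [PartialOrder A] [StarOrderedRing A]
    (τ : A →ₗ[ℂ] ℂ) (hpos : ∀ a : A, 0 ≤ (τ (star a * a)).re)
    {y : A} (hy : 0 ≤ y) : 0 ≤ (τ y).re := by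
  rw [StarOrderedRing.nonneg_iff] at hy
  induction hy using AddSubmonoid.closure_induction with
  | mem z hz => obtain ⟨s, rfl⟩ := hz; exact hpos s
  | zero => simp
  | add z w _ _ hz hw => rw [map_add]; exact add_nonneg (by simpa using hz) (by simpa using hw)

lemma aux_state_bound16 [PartialOrder A] [StarOrderedRing A]
    (τ : A →ₗ[ℂ] ℂ) (hτ1 : τ 1 = 1) (hpos : ∀ a : A, 0 ≤ (τ (star a * a)).re)
    (x : A) : (τ (star x * x)).re ≤ ‖x‖ * ‖x‖ := by
  letI : CStarAlgebra A := {}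
  have h1 : star x * x ≤ algebraMap ℝ A (‖x‖ ^ 2) :=
    CStarAlgebra.star_mul_le_algebraMap_norm_sq
  have h2 : 0 ≤ algebraMap ℝ A (‖x‖ ^ 2) - star x * x := sub_nonneg.mpr h1
  have h3 := aux_re_nonneg16 τ hpos h2
  have h4 : τ (algebraMap ℝ A (‖x‖ ^ 2)) = ((‖x‖ ^ 2 : ℝ) : ℂ) := by
    rw [IsScalarTower.algebraMap_apply ℝ ℂ A, Algebra.algebraMap_eq_smul_one, map_smul, hτ1,
      smul_eq_mul, mul_one, Complex.coe_algebraMap]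
  rw [map_sub, h4] at h3
  rw [Complex.sub_re, Complex.ofReal_re] at h3
  nlinarith [h3]

end AuxSpan16

theorem span_words_two_isomorphic_to_L2
    {A : Type*} [NormedRing A] [StarRing A] [CStarRing A] [NormedAlgebra ℂ A]
    [StarModule ℂ A] [CompleteSpace A]
    (θ : ℝ) (hθ : Irrational θ)
    (U V : unitary A)
    (hrel : (U : A) * V = Complex.exp (2 * Real.pi * I * θ) • ((V : A) * (U : A)))
    (τ : A →ₗ[ℂ] ℂ) (hτ1 : τ 1 = 1)
    (htrace : ∀ a b : A, τ (a * b) = τ (b * a))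
    (hpos : ∀ a : A, 0 ≤ (τ (star a * a)).re ∧ (τ (star a * a)).im = 0)
    (hfaithful : ∀ a : A, τ (star a * a) = 0 → a = 0)
    (hcanonical : ∀ a b : ℤ, ¬(a = 0 ∧ b = 0) → τ (((U ^ a * V ^ b : unitary A) : A)) = 0)
    (k l : ℕ → ℕ)
    (e : ℕ → A) (he : ∀ m, e m = ((U ^ k m : unitary A) : A) * ((V ^ l m : unitary A) : A))
    (hanti : ∀ n j, j < n →
      ‖e n * e j + e j * e n‖ ≤ (2 : ℝ) ^ (1 - (n : ℤ)) ∧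
      ‖e n * star (e j) + star (e j) * e n‖ ≤ (2 : ℝ) ^ (1 - (n : ℤ))) :
    ∀ N : ℕ, ∃ n₀ : ℕ, ∀ n ≥ n₀, ∀ a : Fin N → ℂ,
      Real.sqrt ((τ (star (∑ j, a j • e (n + 1 + j)) * (∑ j, a j • e (n + 1 + j)))).re)
        ≤ ‖∑ j, a j • e (n + 1 + j)‖ ∧
      ‖∑ j, a j • e (n + 1 + j)‖ ≤
        2 * Real.sqrt ((τ (star (∑ j, a j • e (n + 1 + j)) *
          (∑ j, a j • e (n + 1 + j)))).re) := by
  letI : CStarAlgebra A := {}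
  letI : PartialOrder A := CStarAlgebra.spectralOrder A
  haveI : StarOrderedRing A := CStarAlgebra.spectralOrderedRing A
  have hnt : Nontrivial A := by
    refine nontrivial_of_ne 1 0 fun h => ?_
    rw [h, map_zero] at hτ1
    exact one_ne_zero hτ1.symm
  set c : ℂ := Complex.exp (2 * Real.pi * I * θ) with hcdef
  have hc : c ≠ 0 := Complex.exp_ne_zero _
  have hrel' := aux_comm16 U V c hc hrel
  have hword := aux_word16 U V c hc hrel'
  have hpos' : ∀ a : A, 0 ≤ (τ (star a * a)).re := fun a => (hpos a).1
  have hee : ∀ m, star (e m) * e m = 1 := by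
    intro m
    rw [he m]
    have : ((U ^ k m : unitary A) : A) * ((V ^ l m : unitary A) : A)
        = ((U ^ k m * V ^ l m : unitary A) : A) := rfl
    rw [this, ← Unitary.coe_star]
    exact Unitary.coe_star_mul_self _
  have heestar : ∀ m, e m * star (e m) = 1 := by
    intro m
    rw [he m]
    have : ((U ^ k m : unitary A) : A) * ((V ^ l m : unitary A) : A)
        = ((U ^ k m * V ^ l m : unitary A) : A) := rfl
    rw [this, ← Unitary.coe_star]
    exact Unitary.coe_mul_star_self _
  -- orthogonality
  have hτe : ∀ p q : ℕ, (k p ≠ k q ∨ l p ≠ l q) → τ (star (e p) * e q) = 0 := by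
    intro p q hne
    rw [he p, he q, hword (k p) (l p) (k q) (l q), map_smul, smul_eq_mul,
      hcanonical ((k q : ℤ) - k p) ((l q : ℤ) - l p) ?_, mul_zero]
    rintro ⟨h1, h2⟩
    rcases hne with h | h
    · exact h (Nat.cast_injective (R := ℤ) (sub_eq_zero.mp h1)).symm
    · exact h (Nat.cast_injective (R := ℤ) (sub_eq_zero.mp h2)).symm
  -- distinctness of words
  have hdiff : ∀ p q : ℕ, p < q → (k p ≠ k q ∨ l p ≠ l q) := by
    intro p q hpq
    by_contra hcon
    push_neg at hcon
    obtain ⟨hk, hl⟩ := hcon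
    have heq : e p = e q := by rw [he p, he q, hk, hl]
    have h2 := (hanti q p hpq).1
    rw [heq] at h2
    have hq2 : e q * e q = (((U ^ k q * V ^ l q) * (U ^ k q * V ^ l q) : unitary A) : A) := by
      rw [he q]; rfl
    have hnorm : ‖e q * e q + e q * e q‖ = 2 := by
      have h2s : e q * e q + e q * e q = (2 : ℂ) • (e q * e q) := (two_smul ℂ _).symm
      rw [h2s, norm_smul, hq2, CStarRing.norm_coe_unitary]
      simp
    rw [hnorm] at h2
    have hle : (2 : ℝ) ^ (1 - (q : ℤ)) ≤ 1 := by
      have : (1 - (q : ℤ)) ≤ 0 := by omega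
      calc (2 : ℝ) ^ (1 - (q : ℤ)) ≤ (2 : ℝ) ^ (0 : ℤ) := zpow_le_zpow_right₀ one_le_two this
        _ = 1 := zpow_zero 2
    linarith
  intro N
  refine ⟨N, fun n hn a => ?_⟩
  set m : Fin N → ℕ := fun j => n + 1 + (j : ℕ) with hm
  set x : A := ∑ j, a j • e (n + 1 + j) with hx
  have hxm : x = ∑ j, a j • e (m j) := rfl
  set S2 : ℝ := ∑ i, ‖a i‖ ^ 2 with hS2def
  have hS2nn : (0 : ℝ) ≤ S2 := Finset.sum_nonneg fun i _ => sq_nonneg _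
  have hsx : star x = ∑ i, (starRingEnd ℂ) (a i) • star (e (m i)) := by
    rw [hxm, star_sum]
    exact Finset.sum_congr rfl fun i _ => by rw [star_smul, starRingEnd_apply]
  -- trace of star x * x
  have hmne : ∀ i j : Fin N, i ≠ j → (k (m i) ≠ k (m j) ∨ l (m i) ≠ l (m j)) := by
    intro i j hij
    rcases Nat.lt_or_ge (m i) (m j) with h | h
    · exact hdiff _ _ h
    · have : m j < m i := by
        rcases lt_or_eq_of_le h with h' | h'
        · exact h'
        · have hmi : m i = n + 1 + (i : ℕ) := rfl
          have hmj : m j = n + 1 + (j : ℕ) := rfl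
          exact absurd (Fin.ext (by omega : (i : ℕ) = (j : ℕ))) hij
      exact (hdiff _ _ this).imp Ne.symm Ne.symm
  have hτxx : τ (star x * x) = ((S2 : ℝ) : ℂ) := by
    have hexp : star x * x = ∑ i, ∑ j, ((starRingEnd ℂ) (a i) * a j) •
        (star (e (m i)) * e (m j)) := by
      rw [hsx, hxm, Finset.sum_mul_sum]
      exact Finset.sum_congr rfl fun i _ => Finset.sum_congr rfl fun j _ =>
        smul_mul_smul_comm _ _ _ _
    rw [hexp, map_sum]
    have hrow : ∀ i : Fin N, τ (∑ j, ((starRingEnd ℂ) (a i) * a j) •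
        (star (e (m i)) * e (m j))) = ((‖a i‖ ^ 2 : ℝ) : ℂ) := by
      intro i
      rw [map_sum]
      rw [Finset.sum_eq_single i]
      · rw [map_smul, hee (m i), hτ1, smul_eq_mul, mul_one, ← Complex.normSq_eq_conj_mul_self,
          Complex.sq_norm]
      · intro j _ hji
        rw [map_smul, hτe (m i) (m j) (hmne i j (Ne.symm hji)), smul_zero]
      · intro h
        exact absurd (Finset.mem_univ i) h
    rw [Finset.sum_congr rfl fun i _ => hrow i]
    rw [hS2def]
    push_cast
    rfl
  have hre : (τ (star x * x)).re = S2 := by rw [hτxx, Complex.ofReal_re]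
  constructor
  · -- lower bound
    have hlow := aux_state_bound16 τ hτ1 hpos' x
    rw [hre] at hlow
    have := Real.sqrt_le_sqrt hlow
    rw [Real.sqrt_mul_self (norm_nonneg x)] at this
    rw [hre]
    exact this
  · -- upper bound
    have hup : ‖x‖ * ‖x‖ ≤ 4 * S2 := by
      have hanti2 : ∀ i j : Fin N, i ≠ j →
          ‖e (m i) * star (e (m j)) + star (e (m j)) * e (m i)‖ ≤ (2:ℝ) ^ (-(n:ℤ) - 1) := by
        intro i j hij
        have hmono : ∀ q : ℕ, n + 2 ≤ q → (2:ℝ) ^ (1 - (q:ℤ)) ≤ (2:ℝ) ^ (-(n:ℤ) - 1) :=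
          fun q hq => zpow_le_zpow_right₀ one_le_two (by omega)
        rcases Nat.lt_or_ge (m j) (m i) with h | h
        · have hb := (hanti (m i) (m j) h).2
          have hmi : m i = n + 1 + (i : ℕ) := rfl
          have hmj : m j = n + 1 + (j : ℕ) := rfl
          have : n + 2 ≤ m i := by omega
          exact le_trans hb (hmono _ this)
        · have hlt : m i < m j := by
            rcases lt_or_eq_of_le h with h' | h'
            · exact h'
            · have hmi : m i = n + 1 + (i : ℕ) := rfl
              have hmj : m j = n + 1 + (j : ℕ) := rfl
              exact absurd (Fin.ext (by omega : (i : ℕ) = (j : ℕ))) hij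
          have hb := (hanti (m j) (m i) hlt).2
          have hst : e (m i) * star (e (m j)) + star (e (m j)) * e (m i)
              = star (e (m j) * star (e (m i)) + star (e (m i)) * e (m j)) := by
            rw [star_add, star_mul, star_mul, star_star]
          have hmi : m i = n + 1 + (i : ℕ) := rfl
          have hmj : m j = n + 1 + (j : ℕ) := rfl
          have : n + 2 ≤ m j := by omega
          rw [hst, norm_star]
          exact le_trans hb (hmono _ this)
      have hSdec : x * star x + star x * x = ∑ i, ∑ j, (a i * (starRingEnd ℂ) (a j)) •
          (e (m i) * star (e (m j)) + star (e (m j)) * e (m i)) := by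
        have h1 : x * star x = ∑ i, ∑ j, (a i * (starRingEnd ℂ) (a j)) •
            (e (m i) * star (e (m j))) := by
          rw [hxm, hsx, Finset.sum_mul_sum]
          exact Finset.sum_congr rfl fun i _ => Finset.sum_congr rfl fun j _ =>
            smul_mul_smul_comm _ _ _ _
        have h2 : star x * x = ∑ i, ∑ j, (a i * (starRingEnd ℂ) (a j)) •
            (star (e (m j)) * e (m i)) := by
          rw [hxm, hsx, Finset.sum_mul_sum, Finset.sum_comm]
          exact Finset.sum_congr rfl fun i _ => Finset.sum_congr rfl fun j _ => by
            rw [smul_mul_smul_comm, mul_comm]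
        rw [h1, h2, ← Finset.sum_add_distrib]
        exact Finset.sum_congr rfl fun i _ => by
          rw [← Finset.sum_add_distrib]
          exact Finset.sum_congr rfl fun j _ => (smul_add _ _ _).symm
      have hbound : ‖x * star x + star x * x‖
          ≤ 2 * S2 + (2:ℝ) ^ (-(n:ℤ) - 1) * (N * S2) := by
        calc ‖x * star x + star x * x‖
            ≤ ∑ i, ‖∑ j, (a i * (starRingEnd ℂ) (a j)) •
              (e (m i) * star (e (m j)) + star (e (m j)) * e (m i))‖ := by
              rw [hSdec]; exact norm_sum_le _ _
          _ ≤ ∑ i, ∑ j, ‖(a i * (starRingEnd ℂ) (a j)) •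
              (e (m i) * star (e (m j)) + star (e (m j)) * e (m i))‖ :=
              Finset.sum_le_sum fun i _ => norm_sum_le _ _
          _ ≤ ∑ i, ∑ j, ((if i = j then 2 * ‖a i‖ ^ 2 else 0)
              + ‖a i‖ * ‖a j‖ * (2:ℝ) ^ (-(n:ℤ) - 1)) := by
              refine Finset.sum_le_sum fun i _ => Finset.sum_le_sum fun j _ => ?_
              rw [norm_smul]
              by_cases hij : i = j
              · subst hij
                rw [if_pos rfl]
                have hd : ‖e (m i) * star (e (m i)) + star (e (m i)) * e (m i)‖ ≤ 2 := by
                  rw [heestar, hee]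
                  calc ‖(1 : A) + 1‖ ≤ ‖(1:A)‖ + ‖(1:A)‖ := norm_add_le _ _
                    _ = 2 := by rw [CStarRing.norm_one]; norm_num
                have habs : ‖a i * (starRingEnd ℂ) (a i)‖ = ‖a i‖ ^ 2 := by
                  rw [norm_mul]
                  simp [sq]
                rw [habs]
                have := mul_le_mul_of_nonneg_left hd (by positivity :
                  (0:ℝ) ≤ ‖a i‖ ^ 2)
                have hnn : (0:ℝ) ≤ ‖a i‖ * ‖a i‖
                    * (2:ℝ) ^ (-(n:ℤ) - 1) := by positivity
                linarith
              · simp only [if_neg hij]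
                have habs : ‖a i * (starRingEnd ℂ) (a j)‖
                    = ‖a i‖ * ‖a j‖ := by
                  rw [norm_mul]
                  simp
                rw [habs]
                have := mul_le_mul_of_nonneg_left (hanti2 i j hij) (by positivity :
                  (0:ℝ) ≤ ‖a i‖ * ‖a j‖)
                linarith
          _ = 2 * S2 + (∑ i, ‖a i‖) * (∑ j, ‖a j‖)
              * (2:ℝ) ^ (-(n:ℤ) - 1) := by
              have hA : (∑ i : Fin N, ∑ j : Fin N,
                  (if i = j then 2 * ‖a i‖ ^ 2 else 0)) = 2 * S2 := by
                rw [hS2def, Finset.mul_sum]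
                refine Finset.sum_congr rfl fun i _ => ?_
                rw [Finset.sum_ite_eq Finset.univ i fun j => 2 * ‖a i‖ ^ 2,
                  if_pos (Finset.mem_univ i)]
              have hB : (∑ i : Fin N, ∑ j : Fin N,
                  ‖a i‖ * ‖a j‖ * (2:ℝ) ^ (-(n:ℤ) - 1))
                  = (∑ i, ‖a i‖) * (∑ j, ‖a j‖)
                    * (2:ℝ) ^ (-(n:ℤ) - 1) := by
                rw [eq_comm]
                simp only [Finset.sum_mul, Finset.mul_sum, mul_assoc]
                rw [Finset.sum_comm]
              rw [Finset.sum_congr rfl fun i _ => Finset.sum_add_distrib,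
                Finset.sum_add_distrib, hA, hB]
          _ ≤ 2 * S2 + (2:ℝ) ^ (-(n:ℤ) - 1) * (N * S2) := by
              have hcs : (∑ i, ‖a i‖) * (∑ j, ‖a j‖) ≤ N * S2 := by
                have := sq_sum_le_card_mul_sum_sq (s := (Finset.univ : Finset (Fin N)))
                  (f := fun i => ‖a i‖)
                simpa [sq, hS2def, Finset.card_univ] using this
              have hpow : (0:ℝ) ≤ (2:ℝ) ^ (-(n:ℤ) - 1) := by positivity
              nlinarith [hcs, hpow]
      have hNsmall : (2:ℝ) ^ (-(n:ℤ) - 1) * (N * S2) ≤ 2 * S2 := by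
        have hN2 : (N : ℝ) ≤ (2:ℝ) ^ (n + 1 : ℕ) := by
          have h1 : N < 2 ^ N := Nat.lt_two_pow_self
          have h2 : (2:ℕ) ^ N ≤ 2 ^ (n + 1) := Nat.pow_le_pow_right (by norm_num) (by omega)
          exact_mod_cast (le_of_lt (lt_of_lt_of_le h1 h2))
        have hkey : (2:ℝ) ^ (-(n:ℤ) - 1) * (N : ℝ) ≤ 1 := by
          have : (2:ℝ) ^ (-(n:ℤ) - 1) * (2:ℝ) ^ ((n:ℤ) + 1) = 1 := by
            rw [← zpow_add₀ (by norm_num : (2:ℝ) ≠ 0)]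
            norm_num
          have hc2 : ((2:ℝ) ^ (n + 1 : ℕ)) = (2:ℝ) ^ ((n:ℤ) + 1) := by
            rw [← zpow_natCast]
            norm_num
          have hpow : (0:ℝ) ≤ (2:ℝ) ^ (-(n:ℤ) - 1) := by positivity
          calc (2:ℝ) ^ (-(n:ℤ) - 1) * (N : ℝ)
              ≤ (2:ℝ) ^ (-(n:ℤ) - 1) * (2:ℝ) ^ ((n:ℤ) + 1) := by
                rw [← hc2] at *
                exact mul_le_mul_of_nonneg_left (hc2 ▸ hN2) hpow
            _ = 1 := this
        nlinarith [hkey, hS2nn]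
      have hord : star x * x ≤ x * star x + star x * x :=
        le_add_of_nonneg_left (mul_star_self_nonneg x)
      have h5 : ‖star x * x‖ ≤ ‖x * star x + star x * x‖ :=
        CStarAlgebra.norm_le_norm_of_nonneg_of_le (star_mul_self_nonneg x) hord
      rw [← CStarRing.norm_star_mul_self]
      linarith
    rw [hre]
    have h1 : ‖x‖ ≤ Real.sqrt (4 * S2) := by
      have := Real.sqrt_le_sqrt hup
      rwa [Real.sqrt_mul_self (norm_nonneg x)] at this
    have h2 : Real.sqrt (4 * S2) = 2 * Real.sqrt S2 := by
      rw [show (4 : ℝ) * S2 = (2 * Real.sqrt S2) ^ 2 by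
        rw [mul_pow, Real.sq_sqrt hS2nn]; ring]
      exact Real.sqrt_sq (by positivity)
    rw [← h2]
    exact h1
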